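/- Let G be a finite group such that every symmetric 2-cocycle on G with values in ℂˣ is a coboundary. Then the commutator subgroup of the enveloping group A(G) of the conjugacy quandle of G is isomorphic (as a group) to the commutator subgroup of G. -/

import Mathlib

/-- A 2-cocycle on a group `G` with values in `ℂˣ` (trivial action). -/
def IsTwoCocycle {G : Type*} [Group G] (α : G → G → ℂˣ) : Prop :=
  ∀ g h k : G, α g h * α (g * h) k = α g (h * k) * α h k

/-- A 2-cocycle is symmetric if `α g h = α h g` for all `g h`. -/
def IsSymmCocycle {G : Type*} [Group G] (α : G → G → ℂˣ) : Prop :=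
  ∀ g h : G, α g h = α h g

/-- A 2-cocycle is a coboundary if `α g h = β g * β h * (β (g*h))⁻¹` for some `β`. -/
def IsCoboundary {G : Type*} [Group G] (α : G → G → ℂˣ) : Prop :=
  ∃ β : G → ℂˣ, ∀ g h : G, α g h = β g * β h * (β (g * h))⁻¹

/-- Relations `e_g e_h e_g⁻¹ = e_{g h g⁻¹}` defining the enveloping group of the
conjugacy quandle of `G`. -/
def conjQuandleRels (G : Type*) [Group G] : Set (FreeGroup G) :=
  { r | ∃ g h : G, r = FreeGroup.of g * FreeGroup.of h * (FreeGroup.of g)⁻¹ *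
      (FreeGroup.of (g * h * g⁻¹))⁻¹ }

/-- The enveloping group `A(G)` of the conjugacy quandle of `G`, as a presented group. -/
abbrev EnvelopingGroup (G : Type*) [Group G] : Type _ :=
  PresentedGroup (conjQuandleRels G)

/-- If every symmetric 2-cocycle on a finite group `G` is a coboundary, then the
commutator subgroup of `A(G)` is isomorphic to the commutator subgroup of `G`. -/
noncomputable def eps {G : Type*} [Group G] (α : G → G → ℂˣ) (k v : G) : ℂˣ :=
  α v k * (α k (k⁻¹ * v * k))⁻¹

lemma eps_cocycle {G : Type*} [Group G] {α : G → G → ℂˣ} (hα : IsTwoCocycle α)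
    (k₁ k₂ v : G) :
    eps α (k₁ * k₂) v = eps α k₁ v * eps α k₂ (k₁⁻¹ * v * k₁) := by
  have hA := hα v k₁ k₂
  have hB := hα k₁ (k₁⁻¹ * v * k₁) k₂
  have hC := hα k₁ k₂ (k₂⁻¹ * (k₁⁻¹ * v * k₁) * k₂)
  rw [show k₁ * (k₁⁻¹ * v * k₁) = v * k₁ by group] at hB
  rw [show k₂ * (k₂⁻¹ * (k₁⁻¹ * v * k₁) * k₂) = (k₁⁻¹ * v * k₁) * k₂ by group] at hC
  unfold eps
  rw [show (k₁ * k₂)⁻¹ * v * (k₁ * k₂) = k₂⁻¹ * (k₁⁻¹ * v * k₁) * k₂ by group]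
  rw [Units.ext_iff]
  push_cast [Units.val_mul]
  have e1 := congrArg Units.val hA
  have e2 := congrArg Units.val hB
  have e3 := congrArg Units.val hC
  simp only [Units.val_mul] at e1 e2 e3
  field_simp
  have hd : ((α k₁ k₂ : ℂˣ) : ℂ) ≠ 0 := Units.ne_zero _
  refine mul_left_cancel₀ hd ?_
  linear_combination (-((α k₂ (k₂⁻¹ * (k₁⁻¹ * v * k₁) * k₂) : ℂˣ) : ℂ) * ((α k₁ (k₁⁻¹ * v * k₁) : ℂˣ) : ℂ)) * e1 + (((α v k₁ : ℂˣ) : ℂ) * ((α k₂ (k₂⁻¹ * (k₁⁻¹ * v * k₁) * k₂) : ℂˣ) : ℂ)) * e2 + (-((α v k₁ : ℂˣ) : ℂ) * ((α (k₁⁻¹ * v * k₁) k₂ : ℂˣ) : ℂ)) * e3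

section Symm
variable {G : Type*} [Group G]

lemma eps_one {α : G → G → ℂˣ} (hw : ∀ g h : G, g * h = h * g → α g h = α h g)
    {k v : G} (hkv : k * v = v * k) : eps α k v = 1 := by
  have h1 : k⁻¹ * v * k = v := by rw [mul_assoc, ← hkv]; group
  rw [eps, h1, hw v k (by rw [hkv]), mul_inv_cancel]

lemma eps_welldef {α : G → G → ℂˣ} (hα : IsTwoCocycle α)
    (hw : ∀ g h : G, g * h = h * g → α g h = α h g)
    {r m m' : G} (hmm : m⁻¹ * r * m = m'⁻¹ * r * m') :
    eps α m r = eps α m' r := by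
  have hm' : m' = m * (m⁻¹ * m') := by group
  have h4 : (m⁻¹ * m') * (m⁻¹ * r * m) * (m⁻¹ * m')⁻¹ = m⁻¹ * r * m := by
    conv_lhs => rw [hmm]
    group
  have hcomm : (m⁻¹ * m') * (m⁻¹ * r * m) = (m⁻¹ * r * m) * (m⁻¹ * m') := by
    conv_lhs => rw [show (m⁻¹ * m') * (m⁻¹ * r * m) =
      ((m⁻¹ * m') * (m⁻¹ * r * m) * (m⁻¹ * m')⁻¹) * (m⁻¹ * m') by group]
    rw [h4]
  rw [hm', eps_cocycle hα, eps_one hw hcomm, mul_one]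

noncomputable def crep (v : G) : G := (ConjClasses.mk v).out

lemma crep_conj (k v : G) : crep (k⁻¹ * v * k) = crep v := by
  unfold crep
  congr 1
  exact ConjClasses.mk_eq_mk_iff_isConj.mpr (isConj_iff.mpr ⟨k, by group⟩)

lemma crep_isConj (v : G) : ∃ m : G, m⁻¹ * crep v * m = v := by
  have h1 : ConjClasses.mk (crep v) = ConjClasses.mk v := (ConjClasses.mk v).out_eq
  obtain ⟨c, hc⟩ := isConj_iff.mp (ConjClasses.mk_eq_mk_iff_isConj.mp h1)
  exact ⟨c⁻¹, by simpa using hc⟩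

noncomputable def konj (v : G) : G := (crep_isConj v).choose

lemma konj_spec (v : G) : (konj v)⁻¹ * crep v * konj v = v := (crep_isConj v).choose_spec

noncomputable def bsym (α : G → G → ℂˣ) (v : G) : ℂˣ := eps α (konj v) (crep v)

lemma bsym_conj {α : G → G → ℂˣ} (hα : IsTwoCocycle α)
    (hw : ∀ g h : G, g * h = h * g → α g h = α h g) (k v : G) :
    bsym α (k⁻¹ * v * k) = bsym α v * eps α k v := by
  have h0 : crep (k⁻¹ * v * k) = crep v := crep_conj k v
  have h1 : (konj (k⁻¹ * v * k))⁻¹ * crep v * konj (k⁻¹ * v * k) = k⁻¹ * v * k := by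
    rw [← h0]; exact konj_spec _
  have h2 : (konj v * k)⁻¹ * crep v * (konj v * k) = k⁻¹ * v * k := by
    have := konj_spec v
    calc (konj v * k)⁻¹ * crep v * (konj v * k)
        = k⁻¹ * ((konj v)⁻¹ * crep v * konj v) * k := by group
      _ = k⁻¹ * v * k := by rw [this]
  have h3 : eps α (konj (k⁻¹ * v * k)) (crep v) = eps α (konj v * k) (crep v) :=
    eps_welldef hα hw (h1.trans h2.symm)
  rw [bsym, h0, h3, eps_cocycle hα, konj_spec v, bsym]

end Symm

section Main
variable {G : Type*} [Group G]

/-- key symmetrization: a weakly symmetric cocycle is a coboundary, assuming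
symmetric cocycles are coboundaries. -/
lemma weak_coboundary
    (H : ∀ α : G → G → ℂˣ, IsTwoCocycle α → IsSymmCocycle α → IsCoboundary α)
    {α : G → G → ℂˣ} (hα : IsTwoCocycle α)
    (hw : ∀ g h : G, g * h = h * g → α g h = α h g) : IsCoboundary α := by
  set β : G → ℂˣ := bsym α with hβ
  set α' : G → G → ℂˣ := fun g h => α g h * β g * β h * (β (g * h))⁻¹ with hα'
  have hβconj : ∀ k v : G, β (k⁻¹ * v * k) = β v * eps α k v := fun k v => bsym_conj hα hw k v
  have hc' : IsTwoCocycle α' := by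
    intro g h k
    have e := congrArg Units.val (hα g h k)
    simp only [hα']
    simp only [mul_assoc]
    rw [Units.ext_iff]
    push_cast [Units.val_mul] at e ⊢
    field_simp
    linear_combination e
  have hs' : IsSymmCocycle α' := by
    intro g h
    have hkey : β (h * g) = β (g * h) * eps α g (g * h) := by
      have := hβconj g (g * h)
      rwa [show g⁻¹ * (g * h) * g = h * g by group] at this
    have heps : eps α g (g * h) = α (g * h) g * (α g (h * g))⁻¹ := by
      rw [eps, show g⁻¹ * (g * h) * g = h * g by group]
    have e := congrArg Units.val (hα g h g)
    have e2 := congrArg Units.val hkey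
    rw [heps] at e2
    simp only [hα']
    rw [Units.ext_iff]
    push_cast [Units.val_mul] at e e2 ⊢
    field_simp at e2 ⊢
    have hnz : ((α g (h * g) : ℂˣ) : ℂ) ≠ 0 := Units.ne_zero _
    refine mul_left_cancel₀ hnz ?_
    linear_combination (((α g h : ℂˣ) : ℂ)) * e2 +
      (((β (g * h) : ℂˣ) : ℂ)) * e
  obtain ⟨γ, hγ⟩ := H α' hc' hs'
  refine ⟨fun g => γ g * (β g)⁻¹, fun g h => ?_⟩
  have e := congrArg Units.val (hγ g h)
  simp only [hα'] at e
  rw [Units.ext_iff]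
  push_cast [Units.val_mul] at e ⊢
  field_simp at e ⊢
  linear_combination e

end Main

namespace EnvAux

variable {G : Type*} [Group G]

lemma rels_lift : ∀ r ∈ conjQuandleRels G, FreeGroup.lift (id : G → G) r = 1 := by
  rintro r ⟨g, h, rfl⟩
  simp [FreeGroup.lift_apply_of]

/-- the canonical projection A(G) → G. -/
def pr : EnvelopingGroup G →* G := PresentedGroup.toGroup rels_lift

@[simp] lemma pr_of (g : G) : pr (PresentedGroup.of (rels := conjQuandleRels G) g) = g :=
  PresentedGroup.toGroup.of rels_lift

local notation "oof" => PresentedGroup.of (rels := conjQuandleRels G)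

lemma rel_of (g h : G) : oof g * oof h * (oof g)⁻¹ = oof (g * h * g⁻¹) := by
  rw [← mul_inv_eq_one]
  have hmem : (FreeGroup.of g * FreeGroup.of h * (FreeGroup.of g)⁻¹ *
      (FreeGroup.of (g * h * g⁻¹))⁻¹) ∈ Subgroup.normalClosure (conjQuandleRels G) :=
    Subgroup.subset_normalClosure ⟨g, h, rfl⟩
  have h2 : PresentedGroup.mk (conjQuandleRels G) (FreeGroup.of g * FreeGroup.of h *
      (FreeGroup.of g)⁻¹ * (FreeGroup.of (g * h * g⁻¹))⁻¹) = 1 :=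
    (QuotientGroup.eq_one_iff _).mpr hmem
  simpa [PresentedGroup.of, map_mul, map_inv] using h2

lemma conj_of (a : EnvelopingGroup G) (g : G) :
    a * oof g * a⁻¹ = oof (pr a * g * (pr a)⁻¹) := by
  have hmem : a ∈ Subgroup.closure (Set.range oof) := by
    rw [PresentedGroup.closure_range_of]; trivial
  revert g
  refine Subgroup.closure_induction
    (p := fun x _ => ∀ g : G, x * oof g * x⁻¹ = oof (pr x * g * (pr x)⁻¹))
    ?_ ?_ ?_ ?_ hmem
  · rintro x ⟨b, rfl⟩ g
    rw [rel_of, pr_of]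
  · intro g; simp
  · intro x y hx hy ihx ihy g
    have h0 : x * y * oof g * (x * y)⁻¹ = x * (y * oof g * y⁻¹) * x⁻¹ := by group
    rw [h0, ihy, ihx, map_mul]
    congr 1
    group
  · intro x hx ihx g
    have h1 := ihx ((pr x)⁻¹ * g * pr x)
    have h2 : pr x * ((pr x)⁻¹ * g * pr x) * (pr x)⁻¹ = g := by group
    rw [h2] at h1
    rw [← h1, map_inv]
    group

lemma ker_comm {n : EnvelopingGroup G} (hn : n ∈ (pr (G := G)).ker) (a : EnvelopingGroup G) :
    n * a = a * n := by
  have hmem : a ∈ Subgroup.closure (Set.range oof) := by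
    rw [PresentedGroup.closure_range_of]; trivial
  induction hmem using Subgroup.closure_induction with
  | mem x hx =>
      obtain ⟨b, rfl⟩ := hx
      have := conj_of n b
      rw [MonoidHom.mem_ker.mp hn] at this
      simp only [one_mul, inv_one, mul_one] at this
      calc n * oof b = n * oof b * n⁻¹ * n := by group
        _ = oof b * n := by rw [this]
  | one => simp
  | mul x y hx hy ihx ihy => calc n * (x * y) = (n * x) * y := by group
                               _ = x * (n * y) := by rw [ihx]; group
                               _ = x * y * n := by rw [ihy]; group
  | inv x hx ihx =>
      calc n * x⁻¹ = x⁻¹ * (x * n * x⁻¹) := by group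
        _ = x⁻¹ * (n * x * x⁻¹) := by rw [← ihx]
        _ = x⁻¹ * n := by group

end EnvAux


section Char

lemma units_exp_mul (a b : ℂ) : Units.mk0 (Complex.exp (a + b)) (Complex.exp_ne_zero _)
    = Units.mk0 (Complex.exp a) (Complex.exp_ne_zero _) *
      Units.mk0 (Complex.exp b) (Complex.exp_ne_zero _) := by
  ext
  simp [Complex.exp_add]

noncomputable def expHom : ℚ →+ Additive ℂˣ :=
  AddMonoidHom.mk' (fun q => Additive.ofMul (Units.mk0 (Complex.exp (2 * Real.pi * Complex.I * q))
    (Complex.exp_ne_zero _))) (by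
      intro a b
      have h1 : (2 : ℂ) * Real.pi * Complex.I * ((a : ℚ) + (b : ℚ) : ℚ) =
          2 * Real.pi * Complex.I * a + 2 * Real.pi * Complex.I * b := by push_cast; ring
      have h2 : Units.mk0 (Complex.exp (2 * Real.pi * Complex.I * ((a + b : ℚ) : ℚ)))
          (Complex.exp_ne_zero _) = Units.mk0 (Complex.exp (2 * Real.pi * Complex.I * a))
          (Complex.exp_ne_zero _) * Units.mk0 (Complex.exp (2 * Real.pi * Complex.I * b))
          (Complex.exp_ne_zero _) := by
        ext
        simp only [Units.val_mul, Units.val_mk0]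
        rw [← Complex.exp_add, h1]
      exact congrArg Additive.ofMul h2)

lemma expHom_apply (q : ℚ) : Additive.toMul (expHom q) =
    Units.mk0 (Complex.exp (2 * Real.pi * Complex.I * q)) (Complex.exp_ne_zero _) := rfl

lemma expHom_ker : ∀ z ∈ AddSubgroup.zmultiples (1 : ℚ), expHom z = 0 := by
  rintro z ⟨n, rfl⟩
  rw [map_zsmul]
  have h1 : expHom 1 = 0 := by
    have h2 : Units.mk0 (Complex.exp (2 * Real.pi * Complex.I * ((1 : ℚ) : ℚ)))
        (Complex.exp_ne_zero _) = 1 := by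
      ext
      simp only [Units.val_mk0, Units.val_one]
      push_cast
      rw [mul_one]
      exact Complex.exp_two_pi_mul_I
    exact congrArg Additive.ofMul h2
  rw [h1, smul_zero]

noncomputable def circChar : AddCircle (1 : ℚ) →+ Additive ℂˣ :=
  QuotientAddGroup.lift (AddSubgroup.zmultiples (1 : ℚ)) expHom expHom_ker

lemma circChar_inj {y : AddCircle (1 : ℚ)} (hy : circChar y = 0) : y = 0 := by
  induction y using QuotientAddGroup.induction_on with
  | H q =>
    have hq : expHom q = 0 := hy
    have h3 : Complex.exp (2 * Real.pi * Complex.I * q) = 1 := by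
      have h4 := congrArg (fun z => ((Additive.toMul z : ℂˣ) : ℂ)) hq
      simpa [expHom_apply] using h4
    obtain ⟨n, hn⟩ := Complex.exp_eq_one_iff.mp h3
    have h2 : (2 * (Real.pi : ℂ) * Complex.I) ≠ 0 := by
      simp [Real.pi_ne_zero, Complex.I_ne_zero]
    have hqn : (q : ℂ) = n := by
      apply mul_left_cancel₀ h2
      rw [hn]; ring
    have h5 : (q : ℚ) = (n : ℚ) := by exact_mod_cast hqn
    rw [QuotientAddGroup.eq_zero_iff]
    exact ⟨n, by simp [h5]⟩

end Char

namespace EnvAux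

variable {G : Type*} [Group G]

local notation "oof" => PresentedGroup.of (rels := conjQuandleRels G)

noncomputable instance : CommGroup ↥(pr (G := G)).ker :=
  { (inferInstance : Group ↥(pr (G := G)).ker) with
    mul_comm := fun a b => Subtype.ext (ker_comm a.2 b.1) }

def cc (g h : G) : EnvelopingGroup G := oof g * oof h * (oof (g * h))⁻¹

lemma cc_mem (g h : G) : cc g h ∈ (pr (G := G)).ker := by
  simp [cc, MonoidHom.mem_ker, map_mul, map_inv, pr_of]

lemma na_mem (a : EnvelopingGroup G) : a * (oof (pr a))⁻¹ ∈ (pr (G := G)).ker := by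
  simp [MonoidHom.mem_ker, map_mul, map_inv, pr_of]

lemma of_mul_cc (h k : G) : oof (h * k) * cc h k = oof h * oof k := by
  rw [← ker_comm (cc_mem h k) (oof (h * k)), cc]
  group

lemma cc_cocycle (g h k : G) : cc g h * cc (g * h) k = cc g (h * k) * cc h k := by
  have hrhs : cc g (h * k) * cc h k = oof g * (oof h * oof k) * (oof (g * (h * k)))⁻¹ := by
    calc cc g (h * k) * cc h k
        = oof g * oof (h * k) * ((oof (g * (h * k)))⁻¹ * cc h k) := by rw [cc]; group
      _ = oof g * oof (h * k) * (cc h k * (oof (g * (h * k)))⁻¹) := by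
          rw [ker_comm (cc_mem h k) ((oof (g * (h * k)))⁻¹)]
      _ = oof g * (oof (h * k) * cc h k) * (oof (g * (h * k)))⁻¹ := by group
      _ = oof g * (oof h * oof k) * (oof (g * (h * k)))⁻¹ := by rw [of_mul_cc]
  rw [hrhs, cc, cc, ← mul_assoc g h k]
  group

lemma cc_conj_comm {g h : G} (hgh : g * h = h * g) : cc g h = cc h g := by
  have h2 : g * h * g⁻¹ = h := by rw [hgh]; group
  have h3 := rel_of g h
  rw [h2] at h3
  have hcomm : oof g * oof h = oof h * oof g := by
    calc oof g * oof h = (oof g * oof h * (oof g)⁻¹) * oof g := by group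
      _ = oof h * oof g := by rw [h3]
  rw [cc, cc, ← hgh, hcomm]

lemma na_split (a b : EnvelopingGroup G) :
    a * b * (oof (pr a * pr b))⁻¹ =
      (a * (oof (pr a))⁻¹) * (b * (oof (pr b))⁻¹) * cc (pr a) (pr b) := by
  have h1 : (a * (oof (pr a))⁻¹) * (b * (oof (pr b))⁻¹)
      = a * ((b * (oof (pr b))⁻¹) * (oof (pr a))⁻¹) := by
    rw [mul_assoc, ← ker_comm (na_mem b) ((oof (pr a))⁻¹)]
  rw [h1, cc]
  group

lemma ker_commutator_eq_one
    (H : ∀ α : G → G → ℂˣ, IsTwoCocycle α → IsSymmCocycle α → IsCoboundary α)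
    {x : EnvelopingGroup G} (hxc : x ∈ commutator (EnvelopingGroup G))
    (hxk : x ∈ (pr (G := G)).ker) : x = 1 := by
  by_contra hx1
  set N := (pr (G := G)).ker with hN
  have hξ : (⟨x, hxk⟩ : ↥N) ≠ 1 := by
    intro hh
    exact hx1 (by simpa using congrArg Subtype.val hh)
  have hξ' : (Additive.ofMul (⟨x, hxk⟩ : ↥N)) ≠ 0 := hξ
  obtain ⟨ch, hch⟩ := CharacterModule.exists_character_apply_ne_zero_of_ne_zero hξ'
  set φ : ↥N →* ℂˣ :=
    AddMonoidHom.toMultiplicativeLeft (circChar.comp (ch : Additive ↥N →+ AddCircle (1 : ℚ)))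
    with hφ
  have hφx : φ ⟨x, hxk⟩ ≠ 1 := by
    intro hh
    apply hch
    apply circChar_inj
    exact hh
  set α : G → G → ℂˣ := fun g h => φ ⟨cc g h, cc_mem g h⟩ with hαdef
  have hα : IsTwoCocycle α := by
    intro g h k
    rw [hαdef]
    simp only
    rw [← map_mul, ← map_mul]
    congr 1
    exact Subtype.ext (cc_cocycle g h k)
  have hweak : ∀ g h : G, g * h = h * g → α g h = α h g := by
    intro g h hgh
    rw [hαdef]
    simp only
    congr 1
    exact Subtype.ext (cc_conj_comm hgh)
  obtain ⟨b, hb⟩ := weak_coboundary H hα hweak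
  set f : EnvelopingGroup G →* ℂˣ := MonoidHom.mk'
    (fun a => φ ⟨a * (oof (pr a))⁻¹, na_mem a⟩ * b (pr a)) (by
      intro a₁ a₂
      have hsub : (⟨a₁ * a₂ * (oof (pr (a₁ * a₂)))⁻¹, na_mem (a₁ * a₂)⟩ : ↥N)
          = ⟨a₁ * (oof (pr a₁))⁻¹, na_mem a₁⟩ * ⟨a₂ * (oof (pr a₂))⁻¹, na_mem a₂⟩ *
            ⟨cc (pr a₁) (pr a₂), cc_mem _ _⟩ := by
        apply Subtype.ext
        push_cast
        rw [map_mul]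
        exact na_split a₁ a₂
      rw [hsub, map_mul, map_mul]
      have hcc : φ ⟨cc (pr a₁) (pr a₂), cc_mem _ _⟩ = α (pr a₁) (pr a₂) := rfl
      rw [hcc, hb (pr a₁) (pr a₂), map_mul]
      rw [Units.ext_iff]
      push_cast [Units.val_mul]
      field_simp) with hf
  have hfx : f x = 1 := by
    have := Abelianization.commutator_subset_ker f hxc
    simpa [MonoidHom.mem_ker] using this
  have hprx : pr x = 1 := hxk
  have hoof1 : oof (1 : G) ∈ N := by simp [hN, MonoidHom.mem_ker, pr_of]
  have hx_eq : (⟨x * (oof (pr x))⁻¹, na_mem x⟩ : ↥N)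
      = ⟨x, hxk⟩ * (⟨oof (1 : G), hoof1⟩ : ↥N)⁻¹ := by
    apply Subtype.ext
    push_cast
    rw [hprx]
  have hcc11 : (⟨oof (1 : G), hoof1⟩ : ↥N) = ⟨cc 1 1, cc_mem 1 1⟩ := by
    apply Subtype.ext
    show oof (1 : G) = cc 1 1
    rw [cc, one_mul]
    group
  have hb1 : φ (⟨oof (1 : G), hoof1⟩ : ↥N) = b 1 := by
    rw [hcc11]
    have : φ ⟨cc 1 1, cc_mem 1 1⟩ = α 1 1 := rfl
    rw [this, hb 1 1, one_mul, mul_inv_cancel_right]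
  have hfx2 : f x = φ ⟨x, hxk⟩ := by
    rw [hf]
    show φ ⟨x * (oof (pr x))⁻¹, na_mem x⟩ * b (pr x) = φ ⟨x, hxk⟩
    rw [hx_eq, map_mul, map_inv, hb1, hprx]
    rw [Units.ext_iff]
    push_cast [Units.val_mul]
    field_simp
  rw [hfx] at hfx2
  exact hφx hfx2.symm

end EnvAux

theorem commutator_env_iso_of_symm_cocycles_coboundaries
    (G : Type*) [Group G] [Fintype G]
    (h : ∀ α : G → G → ℂˣ, IsTwoCocycle α → IsSymmCocycle α → IsCoboundary α) :
    Nonempty (↥(commutator (EnvelopingGroup G)) ≃* ↥(commutator G)) := by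
  classical
  have sur : Function.Surjective (EnvAux.pr (G := G)) := fun g =>
    ⟨PresentedGroup.of g, EnvAux.pr_of g⟩
  have hmap : Subgroup.map (EnvAux.pr (G := G)) (commutator (EnvelopingGroup G))
      = commutator G := by
    rw [commutator_def, commutator_def, Subgroup.map_commutator,
      Subgroup.map_top_of_surjective _ sur]
  have hinj : Function.Injective
      ((EnvAux.pr (G := G)).subgroupMap (commutator (EnvelopingGroup G))) := by
    intro a b hab
    have h1 : EnvAux.pr (a : EnvelopingGroup G) = EnvAux.pr (b : EnvelopingGroup G) :=
      congrArg Subtype.val hab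
    have h2 : EnvAux.pr ((a : EnvelopingGroup G) * (b : EnvelopingGroup G)⁻¹) = 1 := by
      rw [map_mul, map_inv, h1, mul_inv_cancel]
    have h3 : (a : EnvelopingGroup G) * (b : EnvelopingGroup G)⁻¹ = 1 :=
      EnvAux.ker_commutator_eq_one h (mul_mem a.2 (inv_mem b.2)) (MonoidHom.mem_ker.mpr h2)
    exact Subtype.ext (mul_inv_eq_one.mp h3)
  exact ⟨(MulEquiv.ofBijective ((EnvAux.pr (G := G)).subgroupMap (commutator (EnvelopingGroup G)))
    ⟨hinj, (EnvAux.pr (G := G)).subgroupMap_surjective (commutator (EnvelopingGroup G))⟩).trans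
    (MulEquiv.subgroupCongr hmap)⟩
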